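/- For every τ ≥ 0 and every matrix Y ∈ ℝ^{n₁×n₂}, the singular value shrinkage operator satisfies D_τ(Y) = argmin over X ∈ ℝ^{n₁×n₂} of (1/2)‖X − Y‖_F² + τ‖X‖_*; that is, D_τ(Y) is the unique minimizer of this functional. -/

import Mathlib

open Matrix Filter Topology

noncomputable def frob {n₁ n₂ : ℕ} (X : Matrix (Fin n₁) (Fin n₂) ℝ) : ℝ :=
  Real.sqrt (∑ i, ∑ j, (X i j) ^ 2)

noncomputable def mInner {n₁ n₂ : ℕ} (X Y : Matrix (Fin n₁) (Fin n₂) ℝ) : ℝ :=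
  ∑ i, ∑ j, X i j * Y i j

noncomputable def singVal {n₁ n₂ : ℕ} (X : Matrix (Fin n₁) (Fin n₂) ℝ) (j : Fin n₂) : ℝ :=
  Real.sqrt ((show (Xᵀ * X).IsHermitian by
    simpa using Matrix.isHermitian_conjTranspose_mul_self X).eigenvalues j)

noncomputable def nuclearNorm {n₁ n₂ : ℕ} (X : Matrix (Fin n₁) (Fin n₂) ℝ) : ℝ :=
  ∑ j, singVal X j

noncomputable def specNorm {n₁ n₂ : ℕ} (X : Matrix (Fin n₁) (Fin n₂) ℝ) : ℝ :=
  ⨆ j, singVal X j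

noncomputable def ftau {n₁ n₂ : ℕ} (τ : ℝ) (X : Matrix (Fin n₁) (Fin n₂) ℝ) : ℝ :=
  τ * nuclearNorm X + (1 / 2) * frob X ^ 2

def projSet {n₁ n₂ : ℕ} (Ω : Finset (Fin n₁ × Fin n₂)) (X : Matrix (Fin n₁) (Fin n₂) ℝ) :
    Matrix (Fin n₁) (Fin n₂) ℝ :=
  Matrix.of fun i j => if (i, j) ∈ Ω then X i j else 0

def IsSubgradAt {n₁ n₂ : ℕ} (f : Matrix (Fin n₁) (Fin n₂) ℝ → ℝ)
    (Z X₀ : Matrix (Fin n₁) (Fin n₂) ℝ) : Prop :=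
  ∀ X, f X₀ + mInner Z (X - X₀) ≤ f X

noncomputable def eNorm {m : ℕ} (v : Fin m → ℝ) : ℝ := Real.sqrt (∑ i, v i ^ 2)

noncomputable def eInner {m : ℕ} (v w : Fin m → ℝ) : ℝ := ∑ i, v i * w i


section SVTHelpers
open Matrix
open scoped MatrixOrder

lemma Matrix.isHermitian_transpose_mul_self {n₁ n₂ : ℕ} (X : Matrix (Fin n₁) (Fin n₂) ℝ) :
    (Xᴴ * X).IsHermitian :=
  Matrix.isHermitian_conjTranspose_mul_self X

lemma sum_sq_eq_dot {m : ℕ} (v : Fin m → ℝ) : ∑ i, v i ^ 2 = v ⬝ᵥ v := by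
  simp [dotProduct, pow_two]

lemma mulVec_dot_self {m p : ℕ} (U : Matrix (Fin m) (Fin p) ℝ) (hU : Uᵀ * U = 1)
    (z : Fin p → ℝ) : (U *ᵥ z) ⬝ᵥ (U *ᵥ z) = z ⬝ᵥ z := by
  rw [dotProduct_mulVec, ← vecMul_transpose, vecMul_vecMul, hU, vecMul_one]

lemma bessel {m p : ℕ} (V : Matrix (Fin m) (Fin p) ℝ) (hV : Vᵀ * V = 1)
    (v : Fin m → ℝ) : (Vᵀ *ᵥ v) ⬝ᵥ (Vᵀ *ᵥ v) ≤ v ⬝ᵥ v := by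
  set y := Vᵀ *ᵥ v with hy
  have h1 : (V *ᵥ y) ⬝ᵥ v = y ⬝ᵥ y := by
    rw [dotProduct_comm, dotProduct_mulVec, ← transpose_transpose V, vecMul_transpose, ← hy]
  have h2 : (V *ᵥ y) ⬝ᵥ (V *ᵥ y) = y ⬝ᵥ y := mulVec_dot_self V hV y
  have hcs := Finset.sum_mul_sq_le_sq_mul_sq Finset.univ (fun i => (V *ᵥ y) i) (fun i => v i)
  have hyy : (0:ℝ) ≤ y ⬝ᵥ y := by rw [← sum_sq_eq_dot]; positivity
  rcases eq_or_lt_of_le hyy with h | h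
  · rw [← h]; rw [← sum_sq_eq_dot]; positivity
  · have : (y ⬝ᵥ y)^2 ≤ (y ⬝ᵥ y) * (v ⬝ᵥ v) := by
      calc (y ⬝ᵥ y)^2 = ((V *ᵥ y) ⬝ᵥ v)^2 := by rw [h1]
        _ ≤ ((V *ᵥ y) ⬝ᵥ (V *ᵥ y)) * (v ⬝ᵥ v) := by
            simpa [dotProduct, ← sum_sq_eq_dot, pow_two] using hcs
        _ = (y ⬝ᵥ y) * (v ⬝ᵥ v) := by rw [h2]
    nlinarith

lemma specbound {n₁ n₂ r : ℕ} (τ : ℝ)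
    (U : Matrix (Fin n₁) (Fin r) ℝ) (V : Matrix (Fin n₂) (Fin r) ℝ)
    (w : Fin r → ℝ) (hw : ∀ i, |w i| ≤ τ)
    (hU : Uᵀ * U = 1) (hV : Vᵀ * V = 1) (v : Fin n₂ → ℝ) :
    ((U * Matrix.diagonal w * Vᵀ) *ᵥ v) ⬝ᵥ ((U * Matrix.diagonal w * Vᵀ) *ᵥ v)
      ≤ τ^2 * (v ⬝ᵥ v) := by
  have hsplit : (U * diagonal w * Vᵀ) *ᵥ v = U *ᵥ (diagonal w *ᵥ (Vᵀ *ᵥ v)) := by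
    rw [← mulVec_mulVec, ← mulVec_mulVec]
  rw [hsplit, mulVec_dot_self U hU]
  set y := Vᵀ *ᵥ v with hy
  have h1 : (diagonal w *ᵥ y) ⬝ᵥ (diagonal w *ᵥ y) ≤ τ^2 * (y ⬝ᵥ y) := by
    rw [← sum_sq_eq_dot, ← sum_sq_eq_dot, Finset.mul_sum]
    apply Finset.sum_le_sum
    intro i _
    rw [mulVec_diagonal]
    have h2 : (w i)^2 ≤ τ^2 := sq_le_sq' (by linarith [abs_le.mp (hw i)]) (abs_le.mp (hw i)).2
    nlinarith [sq_nonneg (y i), sq_nonneg (w i * y i)]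
  have h3 := bessel V hV v
  have hynn : (0:ℝ) ≤ y ⬝ᵥ y := by rw [← sum_sq_eq_dot]; positivity
  nlinarith [sq_nonneg τ]

lemma mInner_eq_trace {n₁ n₂ : ℕ} (W X : Matrix (Fin n₁) (Fin n₂) ℝ) :
    mInner W X = trace (Wᵀ * X) := by
  simp only [mInner, trace, Matrix.mul_apply, diag_apply, transpose_apply]
  exact Finset.sum_comm

lemma sum_dot_eigen {n₁ n₂ : ℕ} (W X : Matrix (Fin n₁) (Fin n₂) ℝ) :
    mInner W X = ∑ j, (W *ᵥ ⇑((Matrix.isHermitian_transpose_mul_self X).eigenvectorBasis j)) ⬝ᵥ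
      (X *ᵥ ⇑((Matrix.isHermitian_transpose_mul_self X).eigenvectorBasis j)) := by
  set hA := Matrix.isHermitian_transpose_mul_self X with hhA
  set Q : Matrix (Fin n₂) (Fin n₂) ℝ :=
    (Matrix.IsHermitian.eigenvectorUnitary hA : Matrix (Fin n₂) (Fin n₂) ℝ) with hQ
  have hQQ : Q * Qᵀ = 1 := by
    have h := Matrix.mem_unitaryGroup_iff.mp (Matrix.IsHermitian.eigenvectorUnitary hA).2
    have hst : star (Q : Matrix (Fin n₂) (Fin n₂) ℝ) = Qᵀ := by
      ext i j; simp [Matrix.star_apply]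
    rw [← hst]; exact h
  have hcol : ∀ j, (fun i => Q i j) = ⇑(hA.eigenvectorBasis j) := by
    intro j; funext i; rw [hQ]; exact Matrix.IsHermitian.eigenvectorUnitary_apply hA i j
  have key : ∀ j, (W *ᵥ ⇑(hA.eigenvectorBasis j)) ⬝ᵥ (X *ᵥ ⇑(hA.eigenvectorBasis j))
      = ((W * Q)ᵀ * (X * Q)) j j := by
    intro j
    simp only [Matrix.mul_apply, transpose_apply, dotProduct, mulVec, dotProduct, ← hcol]
  calc mInner W X = trace (Wᵀ * X) := mInner_eq_trace W X
    _ = trace ((W * Q)ᵀ * (X * Q)) := by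
        rw [transpose_mul, Matrix.mul_assoc Qᵀ Wᵀ (X * Q), ← Matrix.mul_assoc Wᵀ X Q,
          trace_mul_comm Qᵀ ((Wᵀ * X) * Q), Matrix.mul_assoc (Wᵀ * X) Q Qᵀ, hQQ, Matrix.mul_one]
    _ = ∑ j, ((W * Q)ᵀ * (X * Q)) j j := rfl
    _ = _ := by
        apply Finset.sum_congr rfl
        intro j _
        rw [key j]

lemma eigen_dot_one {n₁ n₂ : ℕ} (X : Matrix (Fin n₁) (Fin n₂) ℝ) (j : Fin n₂) :
    (⇑((Matrix.isHermitian_transpose_mul_self X).eigenvectorBasis j) : Fin n₂ → ℝ) ⬝ᵥ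
    ⇑((Matrix.isHermitian_transpose_mul_self X).eigenvectorBasis j) = 1 := by
  have h := orthonormal_iff_ite.mp
    (Matrix.isHermitian_transpose_mul_self X).eigenvectorBasis.orthonormal j j
  simp only [if_true] at h
  rw [PiLp.inner_apply] at h
  simpa [dotProduct, RCLike.inner_apply, conj_trivial, pow_two] using h

lemma Xq_dot {n₁ n₂ : ℕ} (X : Matrix (Fin n₁) (Fin n₂) ℝ) (j : Fin n₂) :
    (X *ᵥ ⇑((Matrix.isHermitian_transpose_mul_self X).eigenvectorBasis j)) ⬝ᵥ
    (X *ᵥ ⇑((Matrix.isHermitian_transpose_mul_self X).eigenvectorBasis j))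
    = (Matrix.isHermitian_transpose_mul_self X).eigenvalues j := by
  set hA := Matrix.isHermitian_transpose_mul_self X
  set q : Fin n₂ → ℝ := ⇑(hA.eigenvectorBasis j) with hq
  have hct : Xᴴ = Xᵀ := conjTranspose_eq_transpose_of_trivial X
  have hsym : (Xᴴ * X)ᵀ = Xᴴ * X := by
    nth_rewrite 1 [← hA.eq]
    rw [conjTranspose_eq_transpose_of_trivial, transpose_transpose]
  have hAv : (Xᴴ * X) *ᵥ q = hA.eigenvalues j • q := hA.mulVec_eigenvectorBasis j
  rw [dotProduct_mulVec, ← vecMul_transpose, vecMul_vecMul, ← hct, ← mulVec_transpose,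
    hsym, hAv, smul_dotProduct, eigen_dot_one, smul_eq_mul, mul_one]

lemma mInner_le_tau_nuclear {n₁ n₂ : ℕ} (τ : ℝ) (hτ : 0 ≤ τ)
    (W X : Matrix (Fin n₁) (Fin n₂) ℝ)
    (hW : ∀ v : Fin n₂ → ℝ, (W *ᵥ v) ⬝ᵥ (W *ᵥ v) ≤ τ^2 * (v ⬝ᵥ v)) :
    mInner W X ≤ τ * nuclearNorm X := by
  rw [sum_dot_eigen W X, nuclearNorm, Finset.mul_sum]
  apply Finset.sum_le_sum
  intro j _
  set hA := Matrix.isHermitian_transpose_mul_self X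
  set q : Fin n₂ → ℝ := ⇑(hA.eigenvectorBasis j) with hq
  have h1 : (W *ᵥ q) ⬝ᵥ (X *ᵥ q) ≤
      Real.sqrt ((W *ᵥ q) ⬝ᵥ (W *ᵥ q)) * Real.sqrt ((X *ᵥ q) ⬝ᵥ (X *ᵥ q)) := by
    have := Real.sum_mul_le_sqrt_mul_sqrt Finset.univ (fun i => (W *ᵥ q) i) (fun i => (X *ᵥ q) i)
    simpa [dotProduct, pow_two] using this
  have h2 : Real.sqrt ((W *ᵥ q) ⬝ᵥ (W *ᵥ q)) ≤ τ := by
    have hb : (W *ᵥ q) ⬝ᵥ (W *ᵥ q) ≤ τ^2 := by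
      have := hW q
      rwa [eigen_dot_one X j, mul_one] at this
    calc Real.sqrt ((W *ᵥ q) ⬝ᵥ (W *ᵥ q)) ≤ Real.sqrt (τ^2) := Real.sqrt_le_sqrt hb
      _ = τ := Real.sqrt_sq hτ
  have h3 : Real.sqrt ((X *ᵥ q) ⬝ᵥ (X *ᵥ q)) = singVal X j := by
    rw [Xq_dot X j]; rfl
  calc (W *ᵥ q) ⬝ᵥ (X *ᵥ q) ≤ _ := h1
    _ ≤ τ * singVal X j := by
        rw [← h3]
        exact mul_le_mul_of_nonneg_right h2 (Real.sqrt_nonneg _)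

lemma trace_sqrt_eq {n₂ : ℕ} {A : Matrix (Fin n₂) (Fin n₂) ℝ} (hA : A.PosSemidef) :
    trace (CFC.sqrt A) = ∑ j, Real.sqrt (hA.1.eigenvalues j) := by
  rw [CFC.sqrt_eq_cfc, cfc_nnreal_eq_real _ A hA.nonneg, hA.1.cfc_eq]
  simp only [IsHermitian.cfc, Unitary.conjStarAlgAut_apply]
  rw [trace_mul_cycle]
  have h1 : (star hA.1.eigenvectorUnitary : Matrix (Fin n₂) (Fin n₂) ℝ) *
      hA.1.eigenvectorUnitary.1 = 1 := by
    exact Matrix.mem_unitaryGroup_iff'.mp hA.1.eigenvectorUnitary.2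
  rw [h1, Matrix.one_mul, trace_diagonal]
  simp [max_eq_left (hA.eigenvalues_nonneg _)]

lemma nuclear_svd {n₁ n₂ r : ℕ} (U : Matrix (Fin n₁) (Fin r) ℝ) (V : Matrix (Fin n₂) (Fin r) ℝ)
    (d : Fin r → ℝ) (hd : ∀ i, 0 ≤ d i) (hU : Uᵀ * U = 1) (hV : Vᵀ * V = 1) :
    nuclearNorm (U * diagonal d * Vᵀ) = ∑ i, d i := by
  set X := U * diagonal d * Vᵀ with hX
  have hXt : Xᴴ = V * diagonal d * Uᵀ := by
    rw [hX, conjTranspose_eq_transpose_of_trivial, transpose_mul, transpose_mul,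
      transpose_transpose, diagonal_transpose, Matrix.mul_assoc]
  have hXX : Xᴴ * X = V * (diagonal (fun i => d i * d i) * Vᵀ) := by
    rw [hXt, hX]
    simp only [Matrix.mul_assoc]
    rw [← Matrix.mul_assoc Uᵀ U, hU, Matrix.one_mul, ← Matrix.mul_assoc (diagonal d) (diagonal d),
      diagonal_mul_diagonal]
  set S := V * diagonal d * Vᵀ with hS
  have hS2 : S ^ 2 = Xᴴ * X := by
    rw [pow_two, hS, hXX]
    simp only [Matrix.mul_assoc]
    rw [← Matrix.mul_assoc Vᵀ V, hV, Matrix.one_mul,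
      ← Matrix.mul_assoc (diagonal d) (diagonal d), diagonal_mul_diagonal]
  have hSpsd : S.PosSemidef := by
    have h := Matrix.posSemidef_conjTranspose_mul_self (diagonal (fun i => Real.sqrt (d i)) * Vᵀ)
    have heq : (diagonal (fun i => Real.sqrt (d i)) * Vᵀ)ᴴ *
        (diagonal (fun i => Real.sqrt (d i)) * Vᵀ) = S := by
      rw [conjTranspose_eq_transpose_of_trivial, transpose_mul, transpose_transpose,
        diagonal_transpose, hS]
      simp only [Matrix.mul_assoc]
      rw [← Matrix.mul_assoc (diagonal fun i => Real.sqrt (d i)), diagonal_mul_diagonal,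
        show (fun i => Real.sqrt (d i) * Real.sqrt (d i)) = d from
          funext fun i => Real.mul_self_sqrt (hd i)]
    rwa [heq] at h
  have hApsd : (Xᴴ * X).PosSemidef := Matrix.posSemidef_conjTranspose_mul_self X
  have hSsqrt : S = CFC.sqrt (Xᴴ * X) :=
    (CFC.sqrt_unique (a := Xᴴ * X) (by rw [← pow_two, hS2]) hSpsd.nonneg).symm
  have htrS : trace S = ∑ i, d i := by
    rw [hS, trace_mul_cycle, hV, Matrix.one_mul, trace_diagonal]
  have h2 : nuclearNorm X = trace (CFC.sqrt (Xᴴ * X)) := by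
    rw [trace_sqrt_eq hApsd]
    rfl
  rw [h2, ← hSsqrt, htrS]

lemma mInner_svd {n₁ n₂ r : ℕ} (U : Matrix (Fin n₁) (Fin r) ℝ) (V : Matrix (Fin n₂) (Fin r) ℝ)
    (hU : Uᵀ * U = 1) (hV : Vᵀ * V = 1) (w dd : Fin r → ℝ) :
    mInner (U * diagonal w * Vᵀ) (U * diagonal dd * Vᵀ) = ∑ i, w i * dd i := by
  rw [mInner_eq_trace]
  have ht : (U * diagonal w * Vᵀ)ᵀ = V * diagonal w * Uᵀ := by
    rw [transpose_mul, transpose_mul, transpose_transpose, diagonal_transpose, Matrix.mul_assoc]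
  rw [ht]
  have : V * diagonal w * Uᵀ * (U * diagonal dd * Vᵀ)
      = V * (diagonal (fun i => w i * dd i) * Vᵀ) := by
    simp only [Matrix.mul_assoc]
    rw [← Matrix.mul_assoc Uᵀ U, hU, Matrix.one_mul,
      ← Matrix.mul_assoc (diagonal w) (diagonal dd), diagonal_mul_diagonal]
  rw [this, ← Matrix.mul_assoc, trace_mul_cycle, hV, Matrix.one_mul, trace_diagonal]

lemma frob_sq {n₁ n₂ : ℕ} (C : Matrix (Fin n₁) (Fin n₂) ℝ) :
    frob C ^ 2 = ∑ i, ∑ j, (C i j) ^ 2 := by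
  rw [frob, Real.sq_sqrt (by positivity)]

lemma frob_sq_nonneg {n₁ n₂ : ℕ} (C : Matrix (Fin n₁) (Fin n₂) ℝ) : 0 ≤ frob C ^ 2 := by
  rw [frob_sq]; positivity

lemma frob_expand {n₁ n₂ : ℕ} (A B : Matrix (Fin n₁) (Fin n₂) ℝ) :
    frob (A + B) ^ 2 = frob A ^ 2 + 2 * mInner A B + frob B ^ 2 := by
  simp only [frob_sq, mInner, Matrix.add_apply, Finset.mul_sum, ← Finset.sum_add_distrib]
  exact Finset.sum_congr rfl fun i _ => Finset.sum_congr rfl fun j _ => by ring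

lemma mInner_neg_left {n₁ n₂ : ℕ} (A B : Matrix (Fin n₁) (Fin n₂) ℝ) :
    mInner (-A) B = -mInner A B := by
  simp [mInner, Finset.sum_neg_distrib]

lemma mInner_sub_right {n₁ n₂ : ℕ} (A B C : Matrix (Fin n₁) (Fin n₂) ℝ) :
    mInner A (B - C) = mInner A B - mInner A C := by
  simp [mInner, mul_sub, Finset.sum_sub_distrib]

end SVTHelpers

/-- For every `τ ≥ 0` and matrix `Y`, the singular value shrinkage operator
`D_τ(Y) = U diag((σᵢ - τ)₊) Vᵀ` (for any reduced SVD `Y = U diag(σ) Vᵀ`) is the unique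
minimizer of `X ↦ (1/2)‖X - Y‖_F² + τ‖X‖_*`. -/
theorem svt_shrinkage_is_prox (n₁ n₂ r : ℕ) (τ : ℝ) (hτ : 0 ≤ τ)
    (Y : Matrix (Fin n₁) (Fin n₂) ℝ)
    (U : Matrix (Fin n₁) (Fin r) ℝ) (V : Matrix (Fin n₂) (Fin r) ℝ)
    (σ : Fin r → ℝ) (hσ : ∀ i, 0 < σ i)
    (hU : Uᵀ * U = 1) (hV : Vᵀ * V = 1)
    (hY : Y = U * Matrix.diagonal σ * Vᵀ)
    (D : Matrix (Fin n₁) (Fin n₂) ℝ)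
    (hD : D = U * Matrix.diagonal (fun i => max (σ i - τ) 0) * Vᵀ) :
    (∀ X : Matrix (Fin n₁) (Fin n₂) ℝ,
        (1 / 2) * frob (D - Y) ^ 2 + τ * nuclearNorm D ≤
          (1 / 2) * frob (X - Y) ^ 2 + τ * nuclearNorm X) ∧
    (∀ X : Matrix (Fin n₁) (Fin n₂) ℝ,
        (1 / 2) * frob (X - Y) ^ 2 + τ * nuclearNorm X =
          (1 / 2) * frob (D - Y) ^ 2 + τ * nuclearNorm D → X = D) := by
  have hdd0 : ∀ i, 0 ≤ max (σ i - τ) 0 := fun i => le_max_right _ _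
  set dd : Fin r → ℝ := fun i => max (σ i - τ) 0 with hdd
  set w : Fin r → ℝ := fun i => σ i - dd i with hw
  have hwb : ∀ i, |w i| ≤ τ := by
    intro i
    have h1 := (hσ i).le
    rw [abs_le]
    rcases le_total (σ i - τ) 0 with h | h
    · simp only [hw, hdd, max_eq_right h]
      constructor <;> linarith
    · simp only [hw, hdd, max_eq_left h]
      constructor <;> linarith
  have hWeq : Y - D = U * Matrix.diagonal w * Vᵀ := by
    rw [hY, hD, ← Matrix.sub_mul, ← Matrix.mul_sub, ← Matrix.diagonal_sub]
  set W := U * Matrix.diagonal w * Vᵀ with hWdef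
  have key1 : ∀ X : Matrix (Fin n₁) (Fin n₂) ℝ, mInner W X ≤ τ * nuclearNorm X :=
    fun X => mInner_le_tau_nuclear τ hτ W X (fun v => specbound τ U V w hwb hU hV v)
  have hND : nuclearNorm D = ∑ i, dd i := by rw [hD]; exact nuclear_svd U V dd hdd0 hU hV
  have key2 : mInner W D = τ * nuclearNorm D := by
    rw [hND, hD, hWdef, mInner_svd U V hU hV w dd, Finset.mul_sum]
    apply Finset.sum_congr rfl
    intro i _
    rcases le_total (σ i - τ) 0 with h | h
    · simp [hw, hdd, max_eq_right h]
    · simp only [hw, hdd, max_eq_left h, sub_sub_cancel]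
  have master : ∀ X : Matrix (Fin n₁) (Fin n₂) ℝ,
      (1/2) * frob (D - Y) ^ 2 + τ * nuclearNorm D + (1/2) * frob (X - D) ^ 2
        ≤ (1/2) * frob (X - Y) ^ 2 + τ * nuclearNorm X := by
    intro X
    have hsplit : X - Y = (D - Y) + (X - D) := by abel
    have E1 : frob (X - Y) ^ 2
        = frob (D - Y) ^ 2 + 2 * mInner (D - Y) (X - D) + frob (X - D) ^ 2 := by
      rw [hsplit, frob_expand]
    have hne : D - Y = -W := by rw [← hWeq]; abel
    have E2 : mInner (D - Y) (X - D) = -(mInner W X - mInner W D) := by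
      rw [hne, mInner_neg_left, mInner_sub_right]
    have hk := key1 X
    linarith [E1, E2, key2]
  constructor
  · intro X
    have h := master X
    have h0 := frob_sq_nonneg (X - D)
    linarith
  · intro X hXeq
    have h := master X
    have h0 : frob (X - D) ^ 2 ≤ 0 := by linarith
    have h1 : ∑ i, ∑ j, ((X - D) i j) ^ 2 = 0 := by
      refine le_antisymm ?_ (by positivity)
      rw [← frob_sq]; exact h0
    have h2 : ∀ i j, (X - D) i j = 0 := by
      intro i j
      have hj := (Finset.sum_eq_zero_iff_of_nonneg (fun i _ => by positivity)).mp h1 i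
        (Finset.mem_univ i)
      have hjj := (Finset.sum_eq_zero_iff_of_nonneg (fun j _ => by positivity)).mp hj j
        (Finset.mem_univ j)
      exact pow_eq_zero_iff (two_ne_zero) |>.mp hjj
    ext i j
    have h3 := h2 i j
    rw [Matrix.sub_apply] at h3
    linarith
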